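/- Let α and β be exponent sequences and assume there exist A, B > 0 with α_n ≤ A β_n + B for all n ∈ ℕ. Let θ : ℕ → ℂ satisfy θ ∈ Λ_∞(β). Then there exists a positive integer m such that for every k ∈ ℕ there is C > 0 with ∑_{j=0}^∞ |θ_{j+n}| · e^{k β_j} ≤ C · e^{-α_n/m} for all n ∈ ℕ (i.e., the Hankel operator H_θ : Λ_1(α) → Λ_∞(β) is continuous and satisfies the compactness condition, the index m being independent of k). -/
import Mathlib


/-- If `α_n ≤ A β_n + B` and `θ ∈ Λ_∞(β)`, then the Hankel operator
`H_θ : Λ_1(α) → Λ_∞(β)` is continuous and satisfies the compactness condition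
(the index `m` is independent of `k`). -/
theorem hankel_finite_to_infinite_compact
    (α β : ℕ → ℝ) (θ : ℕ → ℂ)
    (hα_nonneg : ∀ n, 0 ≤ α n) (hα_mono : Monotone α)
    (hα_tendsto : Filter.Tendsto α Filter.atTop Filter.atTop)
    (hβ_nonneg : ∀ n, 0 ≤ β n) (hβ_mono : Monotone β)
    (hβ_tendsto : Filter.Tendsto β Filter.atTop Filter.atTop)
    (hAB : ∃ A B : ℝ, 0 < A ∧ 0 < B ∧ ∀ n : ℕ, α n ≤ A * β n + B)
    (hθ : ∀ k : ℕ, Summable fun n : ℕ => ‖θ n‖ * Real.exp ((k : ℝ) * β n)) :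
    ∃ m : ℕ, 0 < m ∧ ∀ k : ℕ, ∃ C : ℝ, 0 < C ∧
      ∀ n : ℕ, (∑' j : ℕ, ‖θ (j + n)‖ * Real.exp ((k : ℝ) * β j)) ≤
        C * Real.exp (-α n / (m : ℝ)) := by
  obtain ⟨A, B, hA, hB, hAB⟩ := hAB
  refine ⟨⌈A⌉₊, Nat.ceil_pos.2 hA, fun k => ?_⟩
  set m : ℕ := ⌈A⌉₊ with hm
  have hm1 : (1 : ℝ) ≤ (m : ℝ) := by
    exact_mod_cast Nat.one_le_iff_ne_zero.2 (Nat.ceil_pos.2 hA).ne'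
  have hmpos : (0 : ℝ) < m := lt_of_lt_of_le one_pos hm1
  set f : ℕ → ℝ := fun i => ‖θ i‖ * Real.exp (((k + 1 : ℕ) : ℝ) * β i) with hfdef
  have hfnn : ∀ i, 0 ≤ f i := fun i => by positivity
  have hS : Summable f := hθ (k + 1)
  set S : ℝ := ∑' i : ℕ, f i with hSdef
  have hSnn : 0 ≤ S := tsum_nonneg hfnn
  refine ⟨(S + 1) * Real.exp B, by positivity, fun n => ?_⟩
  -- key exponent inequality: α n / m ≤ β n + B
  have hexp : α n / (m : ℝ) ≤ β n + B := by
    have hAm : A ≤ (m : ℝ) := Nat.le_ceil A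
    have h1 : α n ≤ (m : ℝ) * β n + B := by
      refine (hAB n).trans ?_
      nlinarith [hβ_nonneg n]
    rw [div_le_iff₀ hmpos]
    nlinarith [hβ_nonneg n]
  -- termwise bound
  have hinj : Function.Injective fun j : ℕ => j + n := add_left_injective n
  have hS' : Summable fun j : ℕ => f (j + n) := hS.comp_injective hinj
  have hterm : ∀ j : ℕ, ‖θ (j + n)‖ * Real.exp ((k : ℝ) * β j) ≤
      Real.exp (-β n) * f (j + n) := by
    intro j
    have hb1 : β j ≤ β (j + n) := hβ_mono (Nat.le_add_right j n)
    have hb2 : β n ≤ β (j + n) := hβ_mono (Nat.le_add_left n j)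
    have hk : (0 : ℝ) ≤ (k : ℝ) := Nat.cast_nonneg k
    have hle : (k : ℝ) * β j ≤ ((k + 1 : ℕ) : ℝ) * β (j + n) + (-β n) := by
      push_cast
      nlinarith
    calc ‖θ (j + n)‖ * Real.exp ((k : ℝ) * β j)
        ≤ ‖θ (j + n)‖ * Real.exp (((k + 1 : ℕ) : ℝ) * β (j + n) + (-β n)) :=
          mul_le_mul_of_nonneg_left (Real.exp_le_exp.2 hle) (norm_nonneg _)
      _ = Real.exp (-β n) * f (j + n) := by
          simp only [hfdef, Real.exp_add]; ring
  have hSum : Summable fun j : ℕ => ‖θ (j + n)‖ * Real.exp ((k : ℝ) * β j) :=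
    Summable.of_nonneg_of_le (fun j => by positivity) hterm
      (hS'.mul_left (Real.exp (-β n)))
  have hshift : (∑' j : ℕ, f (j + n)) ≤ S :=
    tsum_comp_le_tsum_of_inj hS hfnn hinj
  have hshiftnn : 0 ≤ ∑' j : ℕ, f (j + n) := tsum_nonneg fun j => hfnn _
  have h3 : Real.exp (-β n) ≤ Real.exp B * Real.exp (-α n / (m : ℝ)) := by
    rw [← Real.exp_add]
    refine Real.exp_le_exp.2 ?_
    rw [neg_div]
    linarith
  calc (∑' j : ℕ, ‖θ (j + n)‖ * Real.exp ((k : ℝ) * β j))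
      ≤ ∑' j : ℕ, Real.exp (-β n) * f (j + n) :=
        Summable.tsum_le_tsum hterm hSum (hS'.mul_left _)
    _ = Real.exp (-β n) * ∑' j : ℕ, f (j + n) := tsum_mul_left
    _ ≤ Real.exp (-β n) * S := by
        exact mul_le_mul_of_nonneg_left hshift (Real.exp_pos _).le
    _ ≤ (Real.exp B * Real.exp (-α n / (m : ℝ))) * S := by
        exact mul_le_mul_of_nonneg_right h3 hSnn
    _ ≤ (S + 1) * Real.exp B * Real.exp (-α n / (m : ℝ)) := by
        nlinarith [Real.exp_pos B, Real.exp_pos (-α n / (m : ℝ))]
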